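/- For all MTL formulas φ, ψ and every rational N > 0, the following equivalence holds over all signals: φ U ψ ↔ (φ U_{(0,N)} ψ) ∨ (□_{(0,N)} φ ∧ ◇_{={N}} (ψ ∨ (φ ∧ (φ U ψ)))). -/

import Mathlib

open scoped NNRat

/-- An interval `I ⊆ (0,∞)` with endpoints in `ℚ≥0 ∪ {∞}`, used to constrain
MTL temporal operators.  `lo` is the left endpoint, `hi` the right endpoint
(`⊤` meaning `∞`), and the two Booleans record whether the corresponding
endpoint is included. -/
structure MTLIv where
  lo : ℚ≥0
  hi : WithTop ℚ≥0
  loClosed : Bool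
  hiClosed : Bool

namespace MTLIv

/-- Membership of a real number in the interval (intersected with `(0,∞)`). -/
def mem (I : MTLIv) (t : ℝ) : Prop :=
  0 < t ∧
  (if I.loClosed then (I.lo : ℝ) ≤ t else (I.lo : ℝ) < t) ∧
  (∀ q : ℚ≥0, I.hi = (q : WithTop ℚ≥0) →
    (if I.hiClosed then t ≤ (q : ℝ) else t < (q : ℝ)))

/-- An interval is bounded if its right endpoint is not `∞`. -/
def Bounded (I : MTLIv) : Prop := I.hi ≠ ⊤

/-- Scaling an interval by a positive rational: `r • I = {r·t : t ∈ I}`. -/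
def scale (r : ℚ≥0) (I : MTLIv) : MTLIv :=
  ⟨r * I.lo, I.hi.map (fun q => r * q), I.loClosed, I.hiClosed⟩

end MTLIv

/-- The interval `(0,∞)`. -/
def ivInf : MTLIv := ⟨0, ⊤, false, false⟩
/-- The interval `(0,q)`. -/
def ivLT (q : ℚ≥0) : MTLIv := ⟨0, (q : WithTop ℚ≥0), false, false⟩
/-- The singleton interval `{q}`. -/
def ivEQ (q : ℚ≥0) : MTLIv := ⟨q, (q : WithTop ℚ≥0), true, true⟩
/-- The open interval `(p,q)`. -/
def ivOO (p q : ℚ≥0) : MTLIv := ⟨p, (q : WithTop ℚ≥0), false, false⟩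

/-- Formulas of Metric Temporal Logic over atomic propositions `P`:
`φ ::= true | p | φ ∧ φ | ¬φ | φ U_I φ | φ S_I φ`.
In `until I φ ψ` (i.e. `φ U_I ψ`) the witness formula is `ψ`, and similarly
for `since`. -/
inductive MTL (P : Type*) where
  | tt : MTL P
  | atom : P → MTL P
  | and : MTL P → MTL P → MTL P
  | not : MTL P → MTL P
  | until : MTLIv → MTL P → MTL P → MTL P
  | since : MTLIv → MTL P → MTL P → MTL P

namespace MTL

variable {P : Type*}

/-- Satisfaction of an MTL formula by a signal `f : ℝ → Set P` at time `r`. -/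
def sat (f : ℝ → Set P) : MTL P → ℝ → Prop
  | .tt, _ => True
  | .atom p, r => p ∈ f r
  | .and φ ψ, r => φ.sat f r ∧ ψ.sat f r
  | .not φ, r => ¬ φ.sat f r
  | .until I φ ψ, r =>
      ∃ t, r < t ∧ I.mem (t - r) ∧ ψ.sat f t ∧ ∀ u, r < u → u < t → φ.sat f u
  | .since I φ ψ, r =>
      ∃ t, t < r ∧ I.mem (r - t) ∧ ψ.sat f t ∧ ∀ u, t < u → u < r → φ.sat f u

/-- Two MTL formulas are equivalent if they are satisfied by exactly the same
pairs (signal, time point). -/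
def Equiv (φ ψ : MTL P) : Prop :=
  ∀ (f : ℝ → Set P) (r : ℝ), φ.sat f r ↔ ψ.sat f r

/-- Disjunction, as a derived connective. -/
def or (φ ψ : MTL P) : MTL P := .not (.and (.not φ) (.not ψ))

/-- `◇_I φ := true U_I φ`. -/
def dia (I : MTLIv) (φ : MTL P) : MTL P := .until I .tt φ

/-- `□_I φ := ¬◇_I ¬φ`. -/
def box (I : MTLIv) (φ : MTL P) : MTL P := .not (dia I (.not φ))

/-- `◆_I φ := true S_I φ`. -/
def pdia (I : MTLIv) (φ : MTL P) : MTL P := .since I .tt φ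

/-- `■_I φ := ¬◆_I ¬φ`. -/
def pbox (I : MTLIv) (φ : MTL P) : MTL P := .not (pdia I (.not φ))

/-- `K⁺φ := ¬((¬φ) U true)`. -/
def kplus (φ : MTL P) : MTL P := .not (.until ivInf (.not φ) .tt)

/-- A formula is bounded if all intervals occurring in its temporal
operators are bounded. -/
def Bounded : MTL P → Prop
  | .tt => True
  | .atom _ => True
  | .and φ ψ => φ.Bounded ∧ ψ.Bounded
  | .not φ => φ.Bounded
  | .until I φ ψ => I.Bounded ∧ φ.Bounded ∧ ψ.Bounded
  | .since I φ ψ => I.Bounded ∧ φ.Bounded ∧ ψ.Bounded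

/-- All `S_I` operators occurring in the formula are bounded
(`U_I` operators are unrestricted). -/
def SinceOpsBounded : MTL P → Prop
  | .tt => True
  | .atom _ => True
  | .and φ ψ => φ.SinceOpsBounded ∧ ψ.SinceOpsBounded
  | .not φ => φ.SinceOpsBounded
  | .until _ φ ψ => φ.SinceOpsBounded ∧ ψ.SinceOpsBounded
  | .since I φ ψ => I.Bounded ∧ φ.SinceOpsBounded ∧ ψ.SinceOpsBounded

/-- All `U_I` operators occurring in the formula are bounded
(`S_I` operators are unrestricted). -/
def UntilOpsBounded : MTL P → Prop
  | .tt => True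
  | .atom _ => True
  | .and φ ψ => φ.UntilOpsBounded ∧ ψ.UntilOpsBounded
  | .not φ => φ.UntilOpsBounded
  | .until I φ ψ => I.Bounded ∧ φ.UntilOpsBounded ∧ ψ.UntilOpsBounded
  | .since _ φ ψ => φ.UntilOpsBounded ∧ ψ.UntilOpsBounded

/-- No unbounded temporal operator occurs within the scope of a bounded
temporal operator. -/
def NoUnboundedInBounded : MTL P → Prop
  | .tt => True
  | .atom _ => True
  | .and φ ψ => φ.NoUnboundedInBounded ∧ ψ.NoUnboundedInBounded
  | .not φ => φ.NoUnboundedInBounded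
  | .until I φ ψ => (I.Bounded → φ.Bounded ∧ ψ.Bounded) ∧
      φ.NoUnboundedInBounded ∧ ψ.NoUnboundedInBounded
  | .since I φ ψ => (I.Bounded → φ.Bounded ∧ ψ.Bounded) ∧
      φ.NoUnboundedInBounded ∧ ψ.NoUnboundedInBounded

/-- The future-reach of an MTL formula, with values in `ℚ≥0 ∪ {∞}`. -/
def fr : MTL P → WithTop ℚ≥0
  | .tt => 0
  | .atom _ => 0
  | .and φ ψ => max φ.fr ψ.fr
  | .not φ => φ.fr
  | .until I φ ψ => I.hi + max φ.fr ψ.fr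
  | .since I φ ψ => max φ.fr (ψ.fr.map (fun a => a - I.lo))

/-- The past-reach of an MTL formula, with values in `ℚ≥0 ∪ {∞}`. -/
def pr : MTL P → WithTop ℚ≥0
  | .tt => 0
  | .atom _ => 0
  | .and φ ψ => max φ.pr ψ.pr
  | .not φ => φ.pr
  | .since I φ ψ => I.hi + max φ.pr ψ.pr
  | .until I φ ψ => max φ.pr (ψ.pr.map (fun a => a - I.lo))

/-- Boolean combinations of formulas from the class `C`. -/
inductive BoolComb (C : MTL P → Prop) : MTL P → Prop
  | base {φ} : C φ → BoolComb C φ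
  | tt : BoolComb C .tt
  | and {φ ψ} : BoolComb C φ → BoolComb C ψ → BoolComb C (.and φ ψ)
  | not {φ} : BoolComb C φ → BoolComb C (.not φ)

/-- Scaling an MTL formula by a positive rational: every constraining
interval `I` is replaced by `rI`. -/
def scale (r : ℚ≥0) : MTL P → MTL P
  | .tt => .tt
  | .atom p => .atom p
  | .and φ ψ => .and (φ.scale r) (ψ.scale r)
  | .not φ => .not (φ.scale r)
  | .until I φ ψ => .until (I.scale r) (φ.scale r) (ψ.scale r)
  | .since I φ ψ => .since (I.scale r) (φ.scale r) (ψ.scale r)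

end MTL

/-- Terms of QMLO: `t ::= x | t + q` with `q ∈ ℚ` (variables are
represented by natural numbers). -/
inductive QTerm where
  | var : ℕ → QTerm
  | add : QTerm → ℚ → QTerm

namespace QTerm

/-- Value of a term under a valuation of the variables. -/
def val (v : ℕ → ℝ) : QTerm → ℝ
  | .var x => v x
  | .add t q => t.val v + (q : ℝ)

/-- The (unique) variable occurring in a term. -/
def fvar : QTerm → ℕ
  | .var x => x
  | .add t _ => t.fvar

/-- Every shift in the term is `+1`; these are exactly the terms of
`FO(<,+1)`. -/
def OnlyPlusOne : QTerm → Prop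
  | .var _ => True
  | .add t q => q = 1 ∧ t.OnlyPlusOne

/-- Every shift in the term is an integer. -/
def IntShifts : QTerm → Prop
  | .var _ => True
  | .add t q => q.den = 1 ∧ t.IntShifts

/-- The term uses no `+q` function at all (terms of `FO(<)`). -/
def NoShifts : QTerm → Prop
  | .var _ => True
  | .add _ _ => False

/-- Substitution of the term `s` for the variable `y`. -/
def subst (y : ℕ) (s : QTerm) : QTerm → QTerm
  | .var z => if z = y then s else .var z
  | .add t q => .add (subst y s t) q

end QTerm

/-- Formulas of QMLO, the monadic logic of order and metric: first-order
logic with `<`, monadic predicates drawn from `P`, and `+q` (`q ∈ ℚ`). -/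
inductive QMLO (P : Type*) where
  | tt : QMLO P
  | pred : P → QTerm → QMLO P
  | lt : QTerm → QTerm → QMLO P
  | and : QMLO P → QMLO P → QMLO P
  | not : QMLO P → QMLO P
  | ex : ℕ → QMLO P → QMLO P

namespace QMLO

variable {P : Type*}

/-- Satisfaction of a QMLO formula over the reals, by a signal
`f : ℝ → Set P` and a valuation `v` of the variables. -/
def sat (f : ℝ → Set P) : QMLO P → (ℕ → ℝ) → Prop
  | .tt, _ => True
  | .pred p t, v => p ∈ f (t.val v)
  | .lt t₁ t₂, v => t₁.val v < t₂.val v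
  | .and φ ψ, v => φ.sat f v ∧ ψ.sat f v
  | .not φ, v => ¬ φ.sat f v
  | .ex x φ, v => ∃ r : ℝ, φ.sat f (Function.update v x r)

/-- The free variables of a QMLO formula. -/
def freeVars : QMLO P → Set ℕ
  | .tt => ∅
  | .pred _ t => {t.fvar}
  | .lt t₁ t₂ => {t₁.fvar, t₂.fvar}
  | .and φ ψ => φ.freeVars ∪ ψ.freeVars
  | .not φ => φ.freeVars
  | .ex x φ => φ.freeVars \ {x}

/-- All terms use only the `+1` function: the formula belongs to
`FO(<,+1)`. -/
def OnlyPlusOne : QMLO P → Prop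
  | .tt => True
  | .pred _ t => t.OnlyPlusOne
  | .lt t₁ t₂ => t₁.OnlyPlusOne ∧ t₂.OnlyPlusOne
  | .and φ ψ => φ.OnlyPlusOne ∧ ψ.OnlyPlusOne
  | .not φ => φ.OnlyPlusOne
  | .ex _ φ => φ.OnlyPlusOne

/-- All shifts occurring in the formula are integers: the formula belongs to
`FO(<,+1)` up to the standard arithmetical shorthand. -/
def IntShifts : QMLO P → Prop
  | .tt => True
  | .pred _ t => t.IntShifts
  | .lt t₁ t₂ => t₁.IntShifts ∧ t₂.IntShifts
  | .and φ ψ => φ.IntShifts ∧ ψ.IntShifts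
  | .not φ => φ.IntShifts
  | .ex _ φ => φ.IntShifts

/-- The formula uses no `+q` function at all: it belongs to `FO(<)`. -/
def NoShifts : QMLO P → Prop
  | .tt => True
  | .pred _ t => t.NoShifts
  | .lt t₁ t₂ => t₁.NoShifts ∧ t₂.NoShifts
  | .and φ ψ => φ.NoShifts ∧ ψ.NoShifts
  | .not φ => φ.NoShifts
  | .ex _ φ => φ.NoShifts

/-- Substitution of the term `s` for the free occurrences of variable `y`. -/
def subst (y : ℕ) (s : QTerm) : QMLO P → QMLO P
  | .tt => .tt
  | .pred p t => .pred p (t.subst y s)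
  | .lt t₁ t₂ => .lt (t₁.subst y s) (t₂.subst y s)
  | .and φ ψ => .and (subst y s φ) (subst y s ψ)
  | .not φ => .not (subst y s φ)
  | .ex z φ => .ex z (if z = y then φ else subst y s φ)

/-- Scaling of a QMLO formula by a rational `r`: every function symbol `+q`
is replaced by `+(r·q)`. -/
def scale (r : ℚ) : QMLO P → QMLO P
  | .tt => .tt
  | .pred p t => .pred p (tscale t)
  | .lt t₁ t₂ => .lt (tscale t₁) (tscale t₂)
  | .and φ ψ => .and (φ.scale r) (ψ.scale r)
  | .not φ => .not (φ.scale r)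
  | .ex x φ => .ex x (φ.scale r)
where
  /-- scaling of terms -/
  tscale : QTerm → QTerm
  | .var x => .var x
  | .add t q => .add (tscale t) (r * q)

end QMLO

/-- `Bet t₁ t₂ B φ` expresses that `φ` belongs to the class `Bet(t₁,t₂)`,
where `B` is the ambient set of bound variables: every quantified subformula
has the form `∃z ((t₁ ≤ z < t₂) ∧ χ)` (with `t₁ ≤ z` rendered as
`¬(z < t₁)`), and every atomic subformula `P(t)` has `t` a bound occurrence
of a variable. -/
inductive Bet {P : Type*} (t₁ t₂ : QTerm) : Set ℕ → QMLO P → Prop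
  | tt {B} : Bet t₁ t₂ B .tt
  | pred {B} (p : P) (z : ℕ) (h : z ∈ B) : Bet t₁ t₂ B (.pred p (.var z))
  | lt {B} (s₁ s₂ : QTerm) : Bet t₁ t₂ B (.lt s₁ s₂)
  | and {B φ ψ} : Bet t₁ t₂ B φ → Bet t₁ t₂ B ψ → Bet t₁ t₂ B (.and φ ψ)
  | not {B φ} : Bet t₁ t₂ B φ → Bet t₁ t₂ B (.not φ)
  | ex {B φ} (z : ℕ) :
      Bet t₁ t₂ (B ∪ {z}) φ →
      Bet t₁ t₂ B (.ex z (.and (.and (.not (.lt (.var z) t₁)) (.lt (.var z) t₂)) φ))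
lemma mem_ivInf (t : ℝ) : (ivInf).mem t ↔ 0 < t := by
  simp [MTLIv.mem, ivInf]

lemma mem_ivLT (q : ℚ≥0) (t : ℝ) : (ivLT q).mem t ↔ 0 < t ∧ t < (q : ℝ) := by
  constructor
  · rintro ⟨h0, -, h2⟩
    exact ⟨h0, by simpa [ivLT] using h2 q rfl⟩
  · rintro ⟨h0, h1⟩
    refine ⟨h0, by simpa [ivLT] using h0, ?_⟩
    intro q' hq'
    simp only [ivLT] at hq'
    have : q' = q := by exact_mod_cast hq'.symm
    simpa [ivLT, this]

lemma mem_ivEQ (q : ℚ≥0) (hq : 0 < q) (t : ℝ) : (ivEQ q).mem t ↔ t = (q : ℝ) := by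
  constructor
  · rintro ⟨h0, h1, h2⟩
    have h2' := h2 q rfl
    simp only [ivEQ] at h1 h2'
    simp at h1 h2'
    linarith
  · rintro rfl
    refine ⟨by exact_mod_cast hq, by simp [ivEQ], ?_⟩
    intro q' hq'
    simp only [ivEQ] at hq'
    have : q' = q := by exact_mod_cast hq'.symm
    simp [ivEQ, this]

lemma sat_or {P : Type*} (φ ψ : MTL P) (f : ℝ → Set P) (r : ℝ) :
    (MTL.or φ ψ).sat f r ↔ φ.sat f r ∨ ψ.sat f r := by
  simp only [MTL.or, MTL.sat]
  tauto

lemma sat_dia {P : Type*} (I : MTLIv) (φ : MTL P) (f : ℝ → Set P) (r : ℝ) :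
    (MTL.dia I φ).sat f r ↔ ∃ t, r < t ∧ I.mem (t - r) ∧ φ.sat f t := by
  simp [MTL.dia, MTL.sat]

lemma sat_box {P : Type*} (I : MTLIv) (φ : MTL P) (f : ℝ → Set P) (r : ℝ) :
    (MTL.box I φ).sat f r ↔ ∀ t, r < t → I.mem (t - r) → φ.sat f t := by
  simp only [MTL.box, MTL.dia, MTL.sat, not_exists]
  constructor
  · intro h t h1 h2
    by_contra hc
    exact h t ⟨h1, h2, hc, fun u _ _ => trivial⟩
  · rintro h t ⟨h1, h2, hc, -⟩
    exact hc (h t h1 h2)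

/-- `φ U ψ ↔
(φ U_{(0,N)} ψ) ∨ (□_{(0,N)} φ ∧ ◇_{=N} (ψ ∨ (φ ∧ (φ U ψ))))`. -/
theorem until_split_at_N {P : Type*} [Countable P] (φ ψ : MTL P)
    (N : ℚ≥0) (hN : 0 < N) :
    MTL.Equiv
      (.until ivInf φ ψ)
      (MTL.or
        (.until (ivLT N) φ ψ)
        (.and (MTL.box (ivLT N) φ)
          (MTL.dia (ivEQ N) (MTL.or ψ (.and φ (.until ivInf φ ψ)))))) := by
  intro f r
  have hN' : (0:ℝ) < (N:ℝ) := by exact_mod_cast hN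
  rw [sat_or]
  constructor
  · rintro ⟨t, hrt, hmem, hψt, hφ⟩
    rw [mem_ivInf] at hmem
    rcases lt_or_ge (t - r) (N:ℝ) with hcase | hcase
    · exact Or.inl ⟨t, hrt, (mem_ivLT N _).mpr ⟨hmem, hcase⟩, hψt, hφ⟩
    · refine Or.inr ⟨?_, ?_⟩
      · rw [sat_box]
        intro s hs hmems
        rw [mem_ivLT] at hmems
        exact hφ s hs (by linarith [hmems.2])
      · rw [sat_dia]
        refine ⟨r + N, by linarith, (mem_ivEQ N hN _).mpr (by ring), ?_⟩
        rw [sat_or]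
        rcases eq_or_lt_of_le hcase with heq | hlt
        · have : t = r + N := by linarith
          exact Or.inl (this ▸ hψt)
        · refine Or.inr ⟨hφ _ (by linarith) (by linarith), t, by linarith,
            (mem_ivInf _).mpr (by linarith), hψt, fun u hu1 hu2 => hφ u (by linarith) hu2⟩
  · rintro (⟨t, hrt, hmem, hψt, hφ⟩ | ⟨hbox, hdia⟩)
    · rw [mem_ivLT] at hmem
      exact ⟨t, hrt, (mem_ivInf _).mpr hmem.1, hψt, hφ⟩
    · rw [sat_box] at hbox
      rw [sat_dia] at hdia
      obtain ⟨t, hrt, hmemt, hor⟩ := hdia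
      rw [mem_ivEQ N hN] at hmemt
      have ht : t = r + N := by linarith
      have hboxφ : ∀ u, r < u → u < t → φ.sat f u := by
        intro u hu1 hu2
        exact hbox u hu1 ((mem_ivLT N _).mpr ⟨by linarith, by linarith⟩)
      rw [sat_or] at hor
      rcases hor with hψt | ⟨hφt, s, hts, hmems, hψs, hφ'⟩
      · exact ⟨t, hrt, (mem_ivInf _).mpr (by linarith), hψt, hboxφ⟩
      · refine ⟨s, by linarith, (mem_ivInf _).mpr (by linarith), hψs, ?_⟩
        intro u hu1 hu2
        rcases lt_trichotomy u t with h | h | h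
        · exact hboxφ u hu1 h
        · exact h ▸ hφt
        · exact hφ' u h hu2
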